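/- Suppose n ↦ n·F(n) is concave on {0,…,N} (i.e., (n+2)·F(n+2) + n·F(n) ≤ 2·(n+1)·F(n+1) for 0 ≤ n ≤ N−2). Then for every q ∈ [0,1]: (i) the sequence n ↦ W(q,n) is concave on {0,…,N}, i.e., W(q,n+1) − W(q,n) is nonincreasing in n; and (ii) if i_lb(q) ≤ N−1, then W(q, i_lb(q)+1) ≤ W(q, i_lb(q)). -/
import Mathlib


open Finset

noncomputable section

open scoped Classical

/-- Agent `i`'s expected utility for moving, when the other agents `{1,…,N}∖{i}`
independently move with probabilities `p j` and the common belief that θ = 1 is `q`. -/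
def moveUtil (N : ℕ) (F r : ℕ → ℝ) (q : ℝ) (p : ℕ → ℝ) (i : ℕ) : ℝ :=
  q * ∑ T ∈ ((Icc 1 N).erase i).powerset,
      (∏ j ∈ T, p j) * (∏ j ∈ ((Icc 1 N).erase i) \ T, (1 - p j)) * F (T.card + 1)
    - r i

/-- A Bayes–Nash equilibrium at common belief `q`: a profile `p ∈ [0,1]^N` such that
any agent with strictly positive (resp. negative) utility for moving moves (stays)
with probability one. -/
def IsBNE (N : ℕ) (F r : ℕ → ℝ) (q : ℝ) (p : ℕ → ℝ) : Prop :=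
  (∀ i ∈ Icc 1 N, 0 ≤ p i ∧ p i ≤ 1) ∧
  ∀ i ∈ Icc 1 N,
    (0 < moveUtil N F r q p i → p i = 1) ∧
    (moveUtil N F r q p i < 0 → p i = 0)

/-- `i_ub(q) = max{ i ∈ {0,…,N} : q·F(i) − r(i) ≥ 0 }` (the junk value 0 if empty). -/
def iUB (N : ℕ) (F r : ℕ → ℝ) (q : ℝ) : ℕ :=
  ((range (N + 1)).filter (fun i => 0 ≤ q * F i - r i)).sup id

/-- `i_lb(q) = max{ i ∈ {0,…,N} : q·F(i) − r(i) > 0 }`, with value 0 if empty. -/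
def iLB (N : ℕ) (F r : ℕ → ℝ) (q : ℝ) : ℕ :=
  ((range (N + 1)).filter (fun i => 0 < q * F i - r i)).sup id

/-- `W(q,n) = q·n·F(n) − Σ_{i=1}^n r(i)`: welfare of the pure threshold profile `n`. -/
def intWelfare (F r : ℕ → ℝ) (q : ℝ) (n : ℕ) : ℝ :=
  q * n * F n - ∑ i ∈ Icc 1 n, r i

/-- if `n·F(n)` is concave on `{0,…,N}`, then (i) `n ↦ W(q,n)` is
concave on `{0,…,N}` and (ii) `W(q, i_lb(q)+1) ≤ W(q, i_lb(q))` whenever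
`i_lb(q) ≤ N − 1`. -/
theorem stmt14 (N : ℕ) (hN : 1 ≤ N) (F r : ℕ → ℝ)
    (hFnn : ∀ n, n ≤ N → 0 ≤ F n) (hF01 : F 0 = F 1)
    (hFmono : ∀ n, n + 1 ≤ N → F (n + 1) ≤ F n)
    (hnFconc : ∀ n, n + 2 ≤ N →
      ((n : ℝ) + 2) * F (n + 2) + (n : ℝ) * F n ≤ 2 * ((n : ℝ) + 1) * F (n + 1))
    (hr0 : r 0 = 0) (hrnn : ∀ i, i ≤ N → 0 ≤ r i)
    (hrmono : ∀ i, i + 1 ≤ N → r i ≤ r (i + 1))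
    (q : ℝ) (hq0 : 0 ≤ q) (hq1 : q ≤ 1) :
    (∀ n, n + 2 ≤ N →
      intWelfare F r q (n + 2) - intWelfare F r q (n + 1) ≤
        intWelfare F r q (n + 1) - intWelfare F r q n) ∧
    (iLB N F r q + 1 ≤ N →
      intWelfare F r q (iLB N F r q + 1) ≤ intWelfare F r q (iLB N F r q)) := by
  constructor
  · intro n hn
    have hsum2 : ∑ i ∈ Icc 1 (n + 2), r i = (∑ i ∈ Icc 1 (n + 1), r i) + r (n + 2) :=
      Finset.sum_Icc_succ_top (by omega) r
    have hsum1 : ∑ i ∈ Icc 1 (n + 1), r i = (∑ i ∈ Icc 1 n, r i) + r (n + 1) :=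
      Finset.sum_Icc_succ_top (by omega) r
    have hc := hnFconc n hn
    have hr := hrmono (n + 1) (by omega)
    have hq : q * (((n : ℝ) + 2) * F (n + 2) + (n : ℝ) * F n) ≤
        q * (2 * ((n : ℝ) + 1) * F (n + 1)) := by
      apply mul_le_mul_of_nonneg_left _ hq0
      linarith
    simp only [intWelfare, hsum2, hsum1]
    push_cast
    nlinarith
  · intro hle
    set L := iLB N F r q with hL
    have hnot : ¬ (0 < q * F (L + 1) - r (L + 1)) := by
      intro hpos
      have hmem : L + 1 ∈ (range (N + 1)).filter (fun i => 0 < q * F i - r i) := by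
        simp only [Finset.mem_filter, Finset.mem_range]
        exact ⟨by omega, hpos⟩
      have h2 := Finset.le_sup (f := id) hmem
      rw [show ((range (N + 1)).filter (fun i => 0 < q * F i - r i)).sup id = L from rfl] at h2
      simp only [id] at h2
      omega
    have hkey : q * F (L + 1) - r (L + 1) ≤ 0 := by linarith [not_lt.mp hnot]
    have hsum1 : ∑ i ∈ Icc 1 (L + 1), r i = (∑ i ∈ Icc 1 L, r i) + r (L + 1) :=
      Finset.sum_Icc_succ_top (by omega) r
    have hFm : (L : ℝ) * F (L + 1) ≤ (L : ℝ) * F L := by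
      rcases Nat.eq_zero_or_pos L with h0 | h0
      · simp [h0]
      · exact mul_le_mul_of_nonneg_left (hFmono L hle) (by positivity)
    have hqm : q * ((L : ℝ) * F (L + 1)) ≤ q * ((L : ℝ) * F L) :=
      mul_le_mul_of_nonneg_left hFm hq0
    simp only [intWelfare, hsum1]
    push_cast
    nlinarith

end
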